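/- Let m ≥ 1, μ > 0 and L_d ≥ 0. Let f : ℝ^m → ℝ be convex and differentiable with L_d-Lipschitz gradient on the nonnegative orthant ℝ^m_+, define g(λ) := f(λ) + (μ/2)·‖λ‖₂² and L := L_d + μ, and let λ* ∈ ℝ^m_+ satisfy g(λ*) ≤ g(ν) for all ν ∈ ℝ^m_+. Then for every λ ∈ ℝ^m_+, ⟨λ, ∇f(λ)⟩ ≤ (L/μ)·(g(λ) − g(λ*)). -/

import Mathlib

open scoped RealInnerProductSpace

lemma aux_key (L μ a w : ℝ) (hμ : 0 < μ) (hL : μ ≤ L) (ha : 0 ≤ a) :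
    a * w - μ * a^2 ≤ L / μ * (-(w * (max (a - w/(2*L)) 0 - a)) - L * (max (a - w/(2*L)) 0 - a)^2) := by
  have hL0 : 0 < L := lt_of_lt_of_le hμ hL
  rcases le_or_gt (w / (2*L)) a with h | h
  · rw [max_eq_left (by linarith)]
    rw [div_mul_eq_mul_div, le_div_iff₀ hμ]
    have e : a - w/(2*L) - a = -(w/(2*L)) := by ring
    rw [e]
    have h2 : w / (2*L) * (2*L) = w := by field_simp
    nlinarith [sq_nonneg (w - 2*μ*a), sq_nonneg w, mul_pos hμ hL0, sq_nonneg (w/(2*L))]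
  · rw [max_eq_right (by linarith)]
    rw [div_mul_eq_mul_div, le_div_iff₀ hμ]
    have hw : 2*L*a ≤ w := by
      rw [lt_div_iff₀ (by positivity : (0:ℝ) < 2*L)] at h; linarith
    nlinarith [mul_nonneg (sub_nonneg.mpr hL) (mul_nonneg (sub_nonneg.mpr hw) ha), sq_nonneg ((L-μ)*a)]

lemma aux_tangent {E : Type*} [NormedAddCommGroup E] [NormedSpace ℝ E] (f : E → ℝ)
    (hconv : ConvexOn ℝ Set.univ f) (hf : Differentiable ℝ f) (x y : E) :
    f x + fderiv ℝ f x (y - x) ≤ f y := by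
  set q : ℝ → ℝ := fun t => f (x + t • (y - x)) with hq
  have hline : ∀ t : ℝ, x + t • (y - x) = AffineMap.lineMap x y t := by
    intro t
    simp [AffineMap.lineMap_apply]
    abel
  have hqd : ∀ t : ℝ, HasDerivAt q (fderiv ℝ f (x + t • (y - x)) (y - x)) t := by
    intro t
    have h1 : HasDerivAt (fun t : ℝ => x + t • (y - x)) (y - x) t := by
      simpa using ((hasDerivAt_id t).smul_const (y - x)).const_add x
    exact (hf _).hasFDerivAt.comp_hasDerivAt t h1
  have hqc : ConvexOn ℝ Set.univ q := by
    have h2 := hconv.comp_affineMap (AffineMap.lineMap x y)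
    have h3 : q = f ∘ (AffineMap.lineMap x y) := by
      funext t; simp [hq, hline t, Function.comp]
    rw [h3]
    simpa using h2
  have h4 : deriv q 0 ≤ slope q 0 1 :=
    hqc.deriv_le_slope (Set.mem_univ 0) (Set.mem_univ 1) zero_lt_one (hqd 0).differentiableAt
  have h5 : deriv q 0 = fderiv ℝ f x (y - x) := by
    have := (hqd 0).deriv
    simpa using this
  have h6 : slope q 0 1 = f y - f x := by
    simp [slope, hq]
  rw [h5, h6] at h4
  linarith

set_option maxHeartbeats 1000000 in
theorem stmt_12 (m : ℕ) (hm : 1 ≤ m) (μ : ℝ) (hμ : 0 < μ) (Ld : ℝ) (hLd : 0 ≤ Ld)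
    (f : EuclideanSpace ℝ (Fin m) → ℝ)
    (hconv : ConvexOn ℝ Set.univ f) (hf : Differentiable ℝ f)
    (hlip : ∀ x : EuclideanSpace ℝ (Fin m), (∀ i, 0 ≤ x i) →
      ∀ y : EuclideanSpace ℝ (Fin m), (∀ i, 0 ≤ y i) →
      ‖gradient f x - gradient f y‖ ≤ Ld * ‖x - y‖)
    (lstar : EuclideanSpace ℝ (Fin m)) (hstar : ∀ i, 0 ≤ lstar i)
    (hmin : ∀ ν : EuclideanSpace ℝ (Fin m), (∀ i, 0 ≤ ν i) →
      f lstar + (μ / 2) * ‖lstar‖ ^ 2 ≤ f ν + (μ / 2) * ‖ν‖ ^ 2)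
    (lam : EuclideanSpace ℝ (Fin m)) (hlam : ∀ i, 0 ≤ lam i) :
    ∑ i, lam i * gradient f lam i ≤
      ((Ld + μ) / μ) *
        ((f lam + (μ / 2) * ‖lam‖ ^ 2) - (f lstar + (μ / 2) * ‖lstar‖ ^ 2)) := by
  classical
  set L : ℝ := Ld + μ with hLdef
  have hL0 : 0 < L := by positivity
  have hμL : μ ≤ L := by linarith
  set G : EuclideanSpace ℝ (Fin m) → ℝ := fun x => f x + (μ / 2) * ‖x‖ ^ 2 with hGdef
  set D : EuclideanSpace ℝ (Fin m) → (EuclideanSpace ℝ (Fin m) →L[ℝ] ℝ) :=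
    fun x => fderiv ℝ f x + μ • (innerSL ℝ x) with hDdef
  -- fderiv of f in terms of gradient
  have hgradf : ∀ x v : EuclideanSpace ℝ (Fin m), fderiv ℝ f x v = ⟪gradient f x, v⟫ := by
    intro x v
    have h := (hf x).hasGradientAt
    rw [hasGradientAt_iff_hasFDerivAt] at h
    rw [h.fderiv, InnerProductSpace.toDual_apply_apply]
  have hDapply : ∀ x v : EuclideanSpace ℝ (Fin m), D x v = ⟪gradient f x, v⟫ + μ * ⟪x, v⟫ := by
    intro x v
    simp only [hDdef, ContinuousLinearMap.add_apply, ContinuousLinearMap.smul_apply,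
      smul_eq_mul, hgradf, innerSL_apply_apply]
  -- G is differentiable with derivative D
  have hDG : ∀ x : EuclideanSpace ℝ (Fin m), HasFDerivAt G (D x) x := by
    intro x
    have h1 : HasFDerivAt f (fderiv ℝ f x) x := (hf x).hasFDerivAt
    have h2 : HasFDerivAt (fun z : EuclideanSpace ℝ (Fin m) => ‖z‖ ^ 2) (2 • (innerSL ℝ x)) x :=
      (hasStrictFDerivAt_norm_sq x).hasFDerivAt
    have h3 := h1.add (h2.const_smul (μ / 2))
    refine HasFDerivAt.congr_fderiv h3 ?_
    ext v
    simp only [hDdef, ContinuousLinearMap.add_apply, ContinuousLinearMap.smul_apply, smul_eq_mul,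
      ContinuousLinearMap.coe_smul', Pi.smul_apply]
    ring
  -- tangent line inequality for G
  have hGtan : ∀ x y : EuclideanSpace ℝ (Fin m), G x + D x (y - x) ≤ G y := by
    intro x y
    have h1 : f x + fderiv ℝ f x (y - x) ≤ f y := aux_tangent f hconv hf x y
    have h2 : D x (y - x) = fderiv ℝ f x (y - x) + μ * ⟪x, y - x⟫ := by
      rw [hDapply, hgradf]
    have h3 : ‖y - x‖ ^ 2 = ‖y‖ ^ 2 - 2 * ⟪x, y - x⟫ - ‖x‖ ^ 2 := by
      have e1 : ⟪x, y - x⟫ = ⟪x, y⟫ - ‖x‖ ^ 2 := by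
        rw [inner_sub_right, real_inner_self_eq_norm_sq]
      have e2 : ‖y - x‖ ^ 2 = ‖y‖ ^ 2 - 2 * ⟪y, x⟫ + ‖x‖ ^ 2 := norm_sub_sq_real y x
      rw [e2, e1, real_inner_comm x y]
      ring
    have h4 : 0 ≤ ‖y - x‖ ^ 2 := sq_nonneg _
    simp only [hGdef]
    rw [h2]
    nlinarith
  -- Lipschitz bound for D on the nonnegative orthant
  have hDlip : ∀ x : EuclideanSpace ℝ (Fin m), (∀ i, 0 ≤ x i) →
      ∀ y : EuclideanSpace ℝ (Fin m), (∀ i, 0 ≤ y i) → ‖D x - D y‖ ≤ L * ‖x - y‖ := by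
    intro x hx y hy
    apply ContinuousLinearMap.opNorm_le_bound _ (by positivity)
    intro v
    have e : (D x - D y) v = ⟪(gradient f x - gradient f y) + μ • (x - y), v⟫ := by
      simp only [ContinuousLinearMap.sub_apply, hDapply, inner_add_left, inner_sub_left,
        inner_smul_left, starRingEnd_apply, star_trivial]
      ring
    rw [e]
    calc ‖⟪(gradient f x - gradient f y) + μ • (x - y), v⟫‖
        ≤ ‖(gradient f x - gradient f y) + μ • (x - y)‖ * ‖v‖ := norm_inner_le_norm _ _
      _ ≤ (Ld * ‖x - y‖ + μ * ‖x - y‖) * ‖v‖ := by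
          apply mul_le_mul_of_nonneg_right _ (norm_nonneg v)
          calc ‖(gradient f x - gradient f y) + μ • (x - y)‖
              ≤ ‖gradient f x - gradient f y‖ + ‖μ • (x - y)‖ := norm_add_le _ _
            _ ≤ Ld * ‖x - y‖ + μ * ‖x - y‖ := by
                have := hlip x hx y hy
                rw [norm_smul, Real.norm_eq_abs, abs_of_pos hμ]
                linarith
      _ = L * ‖x - y‖ * ‖v‖ := by rw [hLdef]; ring
  -- descent lemma with crude constant L on the orthant
  have hdescent : ∀ x : EuclideanSpace ℝ (Fin m), (∀ i, 0 ≤ x i) →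
      ∀ y : EuclideanSpace ℝ (Fin m), (∀ i, 0 ≤ y i) →
      G y ≤ G x + D x (y - x) + (L * ‖y - x‖) * ‖y - x‖ := by
    intro x hx y hy
    have hseg : ∀ z ∈ segment ℝ x y, (∀ i, 0 ≤ z i) ∧ ‖z - x‖ ≤ ‖y - x‖ := by
      intro z hz
      obtain ⟨a, b, ha, hb, hab, rfl⟩ := hz
      constructor
      · intro i
        have e : (a • x + b • y) i = a * x i + b * y i := by
          simp [PiLp.add_apply, PiLp.smul_apply, smul_eq_mul]
        rw [e]
        exact add_nonneg (mul_nonneg ha (hx i)) (mul_nonneg hb (hy i))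
      · have e : a • x + b • y - x = b • (y - x) := by
          have : a = 1 - b := by linarith
          subst this
          module
        rw [e, norm_smul, Real.norm_eq_abs, abs_of_nonneg hb]
        have : b ≤ 1 := by linarith
        nlinarith [norm_nonneg (y - x)]
    have key := Convex.norm_image_sub_le_of_norm_hasFDerivWithin_le'
      (f := G) (f' := D) (φ := D x) (s := segment ℝ x y) (C := L * ‖y - x‖) (x := x) (y := y)
      (fun z hz => (hDG z).hasFDerivWithinAt)
      (fun z hz => by
        have h1 := hDlip z (hseg z hz).1 x hx
        have h2 := (hseg z hz).2
        calc ‖D z - D x‖ ≤ L * ‖z - x‖ := h1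
          _ ≤ L * ‖y - x‖ := by nlinarith)
      (convex_segment x y) (left_mem_segment ℝ x y) (right_mem_segment ℝ x y)
    have h' : G y - G x - D x (y - x) ≤ L * ‖y - x‖ * ‖y - x‖ := by
      calc G y - G x - D x (y - x) ≤ |G y - G x - D x (y - x)| := le_abs_self _
        _ = ‖G y - G x - D x (y - x)‖ := (Real.norm_eq_abs _).symm
        _ ≤ L * ‖y - x‖ * ‖y - x‖ := key
    linarith
  -- first-order optimality at lstar
  have hopt : ∀ ν : EuclideanSpace ℝ (Fin m), (∀ i, 0 ≤ ν i) → 0 ≤ D lstar (ν - lstar) := by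
    intro ν hν
    have key : ∀ t : ℝ, 0 < t → t ≤ 1 → -(L * ‖ν - lstar‖ ^ 2) * t ≤ D lstar (ν - lstar) := by
      intro t ht0 ht1
      set z : EuclideanSpace ℝ (Fin m) := lstar + t • (ν - lstar) with hz
      have hzK : ∀ i, 0 ≤ z i := by
        intro i
        have e : z i = (1 - t) * lstar i + t * ν i := by
          rw [hz]
          simp only [PiLp.add_apply, PiLp.smul_apply, PiLp.sub_apply, smul_eq_mul]
          ring
        rw [e]
        exact add_nonneg (mul_nonneg (by linarith) (hstar i)) (mul_nonneg ht0.le (hν i))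
      have h1 : G lstar ≤ G z := hmin z hzK
      have h2 : G z + D z (lstar - z) ≤ G lstar := hGtan z lstar
      have h3 : 0 ≤ D z (z - lstar) := by
        have e : z - lstar = -(lstar - z) := by abel
        rw [e, map_neg]
        linarith
      have h4 : z - lstar = t • (ν - lstar) := by rw [hz]; abel
      have h5 : 0 ≤ t * D z (ν - lstar) := by
        rw [h4, map_smul, smul_eq_mul] at h3
        exact h3
      have h6 : 0 ≤ D z (ν - lstar) := nonneg_of_mul_nonneg_right h5 ht0
      have h7 : ‖D z - D lstar‖ ≤ L * (t * ‖ν - lstar‖) := by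
        have := hDlip z hzK lstar hstar
        rw [h4, norm_smul, Real.norm_eq_abs, abs_of_pos ht0] at this
        exact this
      have h8 : ‖(D z - D lstar) (ν - lstar)‖ ≤ L * (t * ‖ν - lstar‖) * ‖ν - lstar‖ :=
        le_trans (ContinuousLinearMap.le_opNorm _ _)
          (mul_le_mul_of_nonneg_right h7 (norm_nonneg _))
      rw [ContinuousLinearMap.sub_apply, Real.norm_eq_abs] at h8
      have h9 := (abs_le.mp h8).2
      nlinarith [sq_abs (‖ν - lstar‖)]
    by_contra hcon
    push_neg at hcon
    set I : ℝ := D lstar (ν - lstar) with hI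
    set c : ℝ := L * ‖ν - lstar‖ ^ 2 with hc
    have hc0 : 0 ≤ c := by positivity
    rcases eq_or_lt_of_le hc0 with hceq | hcpos
    · have := key 1 one_pos le_rfl
      rw [← hceq] at this
      simp at this
      linarith
    · have htpos : 0 < min 1 (-I / (2 * c)) := by
        apply lt_min one_pos
        apply div_pos (by linarith) (by linarith)
      have hle1 : min 1 (-I / (2 * c)) ≤ 1 := min_le_left _ _
      have := key _ htpos hle1
      have h10 : c * min 1 (-I / (2 * c)) ≤ c * (-I / (2 * c)) :=
        mul_le_mul_of_nonneg_left (min_le_right _ _) hc0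
      have h11 : c * (-I / (2 * c)) = -I / 2 := by field_simp
      nlinarith
  -- two optimality consequences
  have hopt1 : 0 ≤ D lstar lam := by
    have h := hopt (lstar + lam) (fun i => by
      have e : (lstar + lam) i = lstar i + lam i := rfl
      rw [e]; exact add_nonneg (hstar i) (hlam i))
    rw [add_sub_cancel_left] at h
    exact h
  have hopt2 : D lstar lstar ≤ 0 := by
    have h := hopt 0 (fun i => le_rfl)
    rw [zero_sub, map_neg] at h
    linarith
  -- the vector w and projected point y
  set gl : EuclideanSpace ℝ (Fin m) := gradient f lam with hgl
  set gs : EuclideanSpace ℝ (Fin m) := gradient f lstar with hgs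
  set w : EuclideanSpace ℝ (Fin m) := (gl - gs) + μ • (lam - lstar) with hw
  set y : EuclideanSpace ℝ (Fin m) :=
    (WithLp.toLp 2 (fun i => max (lam i - w i / (2 * L)) 0) : EuclideanSpace ℝ (Fin m)) with hy
  have hyK : ∀ i, 0 ≤ y i := fun i => le_max_right _ _
  have hyi : ∀ i, y i = max (lam i - w i / (2 * L)) 0 := fun i => rfl
  have hwi : ∀ i, w i = gl i - gs i + μ * (lam i - lstar i) := fun i => rfl
  -- difference of derivatives is inner with w
  have hDdiff : ∀ v : EuclideanSpace ℝ (Fin m), D lam v - D lstar v = ⟪w, v⟫ := by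
    intro v
    rw [hDapply, hDapply, hw]
    rw [inner_add_left, inner_sub_left, real_inner_smul_left, inner_sub_left]
    ring
  -- scalar sum inequality (I)
  have hkey : ∑ i, (lam i * w i - μ * (lam i) ^ 2)
      ≤ L / μ * ∑ i, (-(w i * (y i - lam i)) - L * (y i - lam i) ^ 2) := by
    rw [Finset.mul_sum]
    apply Finset.sum_le_sum
    intro i _
    rw [hyi i]
    exact aux_key L μ (lam i) (w i) hμ hμL (hlam i)
  -- inequality (II): descent + tangent
  have hmid : ∑ i, (-(w i * (y i - lam i)) - L * (y i - lam i) ^ 2)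
      ≤ (G lam - G lstar) - D lstar (lam - lstar) := by
    have d1 := hdescent lam hlam y hyK
    have d2 := hGtan lstar y
    have e1 : D lam (y - lam) = ⟪w, y - lam⟫ + D lstar (y - lam) := by
      rw [← hDdiff]; ring
    have e2 : D lstar (y - lstar) = D lstar (y - lam) + D lstar (lam - lstar) := by
      rw [← map_add]
      congr 1
      abel
    have e3 : ⟪w, y - lam⟫ = ∑ i, w i * (y i - lam i) := by
      simp [PiLp.inner_apply, RCLike.inner_apply, PiLp.sub_apply, conj_trivial]
      exact Finset.sum_congr rfl (fun i _ => mul_comm _ _)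
    have e4 : ‖y - lam‖ ^ 2 = ∑ i, (y i - lam i) ^ 2 := by
      rw [← real_inner_self_eq_norm_sq]
      simp [PiLp.inner_apply, RCLike.inner_apply, PiLp.sub_apply, conj_trivial, sq]
      rw [← sq, EuclideanSpace.norm_eq, Real.sq_sqrt (by positivity)]
      simp [sq]
    have e5 : ∑ i, (-(w i * (y i - lam i)) - L * (y i - lam i) ^ 2)
        = -(∑ i, w i * (y i - lam i)) - L * ∑ i, (y i - lam i) ^ 2 := by
      rw [Finset.sum_sub_distrib, ← Finset.sum_neg_distrib, Finset.mul_sum]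
    rw [e5, ← e3, ← e4]
    have hnorm : L * ‖y - lam‖ * ‖y - lam‖ = L * ‖y - lam‖ ^ 2 := by ring
    rw [e1] at d1
    rw [e2] at d2
    nlinarith
  -- inequality (III): optimality part
  have hstar2 : ∑ i, lam i * (gs i + μ * lstar i) ≤ L / μ * D lstar (lam - lstar) := by
    have e1 : D lstar lam = ∑ i, lam i * (gs i + μ * lstar i) := by
      rw [hDapply]
      simp only [PiLp.inner_apply, RCLike.inner_apply, conj_trivial, Finset.mul_sum]
      rw [← Finset.sum_add_distrib]
      apply Finset.sum_congr rfl
      intro i _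
      ring
    have e2 : D lstar (lam - lstar) = D lstar lam - D lstar lstar := map_sub _ _ _
    have hLμ1 : 1 ≤ L / μ := (one_le_div hμ).mpr hμL
    rw [e2, ← e1]
    nlinarith
  -- final assembly
  have hdecomp : ∑ i, lam i * gl i
      = ∑ i, (lam i * w i - μ * (lam i) ^ 2) + ∑ i, lam i * (gs i + μ * lstar i) := by
    rw [← Finset.sum_add_distrib]
    apply Finset.sum_congr rfl
    intro i _
    rw [hwi i]
    ring
  have hLμ0 : 0 ≤ L / μ := by positivity
  have final : ∑ i, lam i * gl i ≤ L / μ * (G lam - G lstar) := by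
    rw [hdecomp]
    calc ∑ i, (lam i * w i - μ * (lam i) ^ 2) + ∑ i, lam i * (gs i + μ * lstar i)
        ≤ L / μ * ∑ i, (-(w i * (y i - lam i)) - L * (y i - lam i) ^ 2)
            + L / μ * D lstar (lam - lstar) := add_le_add hkey hstar2
      _ ≤ L / μ * ((G lam - G lstar) - D lstar (lam - lstar)) + L / μ * D lstar (lam - lstar) := by
          have := mul_le_mul_of_nonneg_left hmid hLμ0
          linarith
      _ = L / μ * (G lam - G lstar) := by ring
  exact final
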